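/- Let C be a monoidal category equipped with a commutor σ, with local rules τ. Then for all objects A, B, C, D, the morphism τ^A_{B,C⊗D} factors through the local rules τ^A_{B,C} and τ^{A⊗C}_{B,D}: precisely, (α_{A,C,D} ⊗ 1_B) ∘ τ^{A⊗C}_{B,D} ∘ (τ^A_{B,C} ⊗ 1_D) = τ^A_{B,C⊗D} ∘ α_{A⊗B,C,D} as morphisms ((A⊗B)⊗C)⊗D ⟶ (A⊗(C⊗D))⊗B. -/

import Mathlib

open CategoryTheory MonoidalCategory

universe v u

/-- A commutor on a monoidal category: a natural family of isomorphisms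
`σ_{A,B} : A ⊗ B ⟶ B ⊗ A` satisfying the unit, symmetry and coboundary axioms.
A monoidal category with a commutor is a coboundary category. -/
structure Commutor (V : Type u) [Category.{v} V] [MonoidalCategory V] where
  σ : ∀ A B : V, A ⊗ B ⟶ B ⊗ A
  naturality : ∀ {A A' B B' : V} (f : A ⟶ A') (g : B ⟶ B'),
    (f ⊗ₘ g) ≫ σ A' B' = σ A B ≫ (g ⊗ₘ f)
  unit_right : ∀ A : V, σ A (𝟙_ V) = (ρ_ A).hom ≫ (λ_ A).inv
  unit_left : ∀ B : V, σ (𝟙_ V) B = (λ_ B).hom ≫ (ρ_ B).inv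
  symmetry : ∀ A B : V, σ A B ≫ σ B A = 𝟙 (A ⊗ B)
  coboundary : ∀ A B C : V,
    (α_ A B C).hom ≫ (𝟙 A ⊗ₘ σ B C) ≫ σ A (C ⊗ B) ≫ (α_ C B A).hom =
      (σ A B ⊗ₘ 𝟙 C) ≫ σ (B ⊗ A) C

/-- The local rule `τ^A_{B,C} : (A⊗B)⊗C ⟶ (A⊗C)⊗B`. -/
def localRule {V : Type u} [Category.{v} V] [MonoidalCategory V] (c : Commutor V)
    (A B C : V) : (A ⊗ B) ⊗ C ⟶ (A ⊗ C) ⊗ B :=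
  (c.σ A B ⊗ₘ 𝟙 C) ≫ (α_ B A C).hom ≫ c.σ B (A ⊗ C)


/-- `τ^A_{B,C⊗D}` factors through `τ^A_{B,C}` and `τ^{A⊗C}_{B,D}`:
`(α_{A,C,D} ⊗ 1_B) ∘ τ^{A⊗C}_{B,D} ∘ (τ^A_{B,C} ⊗ 1_D) = τ^A_{B,C⊗D} ∘ α_{A⊗B,C,D}`. -/
theorem localRule_tensor_right {V : Type u} [Category.{v} V] [MonoidalCategory V]
    (c : Commutor V) (A B C D : V) :
    (localRule c A B C ⊗ₘ 𝟙 D) ≫ localRule c (A ⊗ C) B D ≫ ((α_ A C D).hom ⊗ₘ 𝟙 B) =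
      (α_ (A ⊗ B) C D).hom ≫ localRule c A B (C ⊗ D) := by
  dsimp [localRule]
  rw [comp_tensor_id, comp_tensor_id]
  slice_lhs 3 4 => rw [← comp_tensor_id, c.symmetry, id_tensorHom_id]
  slice_lhs 5 6 => rw [← c.naturality (𝟙 B) (α_ A C D).hom]
  have key : (((c.σ A B ⊗ₘ 𝟙 C) ⊗ₘ 𝟙 D) ≫ ((α_ B A C).hom ⊗ₘ 𝟙 D)) ≫ 𝟙 _ ≫
      (α_ B (A ⊗ C) D).hom ≫ (𝟙 B ⊗ₘ (α_ A C D).hom) =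
      (α_ (A ⊗ B) C D).hom ≫ (c.σ A B ⊗ₘ 𝟙 (C ⊗ D)) ≫ (α_ B A (C ⊗ D)).hom := by
    simp only [Category.id_comp, tensorHom_id, id_tensorHom]
    simp only [Category.assoc]
    slice_lhs 2 4 => rw [MonoidalCategory.pentagon]
    rw [← Category.assoc, associator_naturality_left, Category.assoc]
  calc _ = ((((c.σ A B ⊗ₘ 𝟙 C) ⊗ₘ 𝟙 D) ≫ ((α_ B A C).hom ⊗ₘ 𝟙 D)) ≫ 𝟙 _ ≫
      (α_ B (A ⊗ C) D).hom ≫ (𝟙 B ⊗ₘ (α_ A C D).hom)) ≫ c.σ B (A ⊗ (C ⊗ D)) := by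
        simp only [Category.assoc, Category.id_comp]
    _ = _ := by rw [key]; simp only [Category.assoc]
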